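/- arXiv:1312.4789 — 4 statements merged into one kernel-verified Lean document; each statement's English description precedes it below -/
import Mathlib

section
/- If Λ is a graph in the class 𝒯, then either Λ is isomorphic to K_{2,2} or Λ contains the complete bipartite graph K_{2,3} as a (not necessarily induced) subgraph. -/
open SimpleGraph

/-- `K_{2,2}`: the 4-cycle, the complete bipartite graph between `{0,2}` and `{1,3}`. -/
def K22 : SimpleGraph (Fin 4) :=
  SimpleGraph.fromRel (fun i j => (i.val + j.val) % 2 = 1)

/-- Coning off the set `Λ` in `G`: add one new vertex adjacent to every vertex of `Λ`. -/
def coneGraph {V : Type} (G : SimpleGraph V) (Λ : Set V) : SimpleGraph (Option V) :=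
  SimpleGraph.fromRel (fun x y =>
    (∃ u v, x = some u ∧ y = some v ∧ G.Adj u v) ∨ (x = none ∧ ∃ v ∈ Λ, y = some v))

/-- The class `𝒯` of thick graphs: the smallest class of finite graphs (closed under
isomorphism) containing `K_{2,2}` and closed under coning off induced subgraphs of
diameter greater than one and under generalized unions along non-clique subgraphs. -/
inductive Thick : ∀ {V : Type}, SimpleGraph V → Prop
  | base : Thick K22
  | cone {V : Type} [Fintype V] (G : SimpleGraph V) (Λ : Set V) (hG : Thick G)
      (hΛ : ∃ u ∈ Λ, ∃ v ∈ Λ, u ≠ v ∧ ¬ G.Adj u v) : Thick (coneGraph G Λ)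
  | union {V : Type} [Fintype V] (G : SimpleGraph V) (V₁ V₂ : Set V)
      (hcover : V₁ ∪ V₂ = Set.univ)
      (h₁ : Thick (G.induce V₁)) (h₂ : Thick (G.induce V₂))
      (hint : ∃ u ∈ V₁ ∩ V₂, ∃ v ∈ V₁ ∩ V₂, u ≠ v ∧ ¬ G.Adj u v) : Thick G
  | iso {V W : Type} {G : SimpleGraph V} {G' : SimpleGraph W} (e : G ≃g G') (hG : Thick G) :
      Thick G'


/-- `K_{2,3}`: the complete bipartite graph with parts `{0,1}` and `{2,3,4}`. -/
def K23 : SimpleGraph (Fin 5) :=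
  SimpleGraph.fromRel (fun i j => i.val < 2 ∧ 2 ≤ j.val)

lemma K22_adj_iff (x y : Fin 4) : K22.Adj x y ↔ x ≠ y ∧ (x.val + y.val) % 2 = 1 := by
  rw [K22, fromRel_adj]
  constructor
  · rintro ⟨h1, h2 | h2⟩ <;> exact ⟨h1, by omega⟩
  · rintro ⟨h1, h2⟩; exact ⟨h1, Or.inl h2⟩

instance : DecidableRel K22.Adj := fun x y => decidable_of_iff' _ (K22_adj_iff x y)

lemma K23_adj_iff (x y : Fin 5) :
    K23.Adj x y ↔ x ≠ y ∧ ((x.val < 2 ∧ 2 ≤ y.val) ∨ (y.val < 2 ∧ 2 ≤ x.val)) := by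
  rw [K23, fromRel_adj]

lemma K22_aux : ∀ x y : Fin 4, x ≠ y → ¬K22.Adj x y →
    ∃ p q : Fin 4, p ≠ q ∧ p ≠ x ∧ p ≠ y ∧ q ≠ x ∧ q ≠ y ∧
      K22.Adj x p ∧ K22.Adj y p ∧ K22.Adj x q ∧ K22.Adj y q ∧
      ∀ z : Fin 4, z = x ∨ z = y ∨ z = p ∨ z = q := by decide

/-- In any graph isomorphic to `K22`, a non-adjacent pair has two common neighbors,
and these four vertices exhaust the graph. -/
lemma K22_common {V : Type} {G : SimpleGraph V} (e : G ≃g K22) (u v : V)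
    (huv : u ≠ v) (hn : ¬ G.Adj u v) :
    ∃ p q : V, p ≠ q ∧ p ≠ u ∧ p ≠ v ∧ q ≠ u ∧ q ≠ v ∧
      G.Adj u p ∧ G.Adj v p ∧ G.Adj u q ∧ G.Adj v q ∧
      ∀ z : V, z = u ∨ z = v ∨ z = p ∨ z = q := by
  obtain ⟨p₀, q₀, hpq, hpx, hpy, hqx, hqy, a1, a2, a3, a4, hall⟩ :=
    K22_aux (e u) (e v) (fun h => huv (e.injective h)) (by rwa [e.map_adj_iff])
  refine ⟨e.symm p₀, e.symm q₀, fun h => hpq (e.symm.injective h),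
    fun h => hpx (by simpa using congrArg e h),
    fun h => hpy (by simpa using congrArg e h),
    fun h => hqx (by simpa using congrArg e h),
    fun h => hqy (by simpa using congrArg e h),
    ?_, ?_, ?_, ?_, ?_⟩
  · rw [← e.map_adj_iff]; simpa using a1
  · rw [← e.map_adj_iff]; simpa using a2
  · rw [← e.map_adj_iff]; simpa using a3
  · rw [← e.map_adj_iff]; simpa using a4
  · intro z
    rcases hall (e z) with h | h | h | h
    · exact Or.inl (e.injective h)
    · exact Or.inr (Or.inl (e.injective h))
    · exact Or.inr (Or.inr (Or.inl (by simpa using congrArg e.symm h)))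
    · exact Or.inr (Or.inr (Or.inr (by simpa using congrArg e.symm h)))

lemma cone_adj_some_some {V : Type} {G : SimpleGraph V} {Λ : Set V} {a b : V}
    (h : G.Adj a b) : (coneGraph G Λ).Adj (some a) (some b) := by
  rw [coneGraph, fromRel_adj]
  exact ⟨by simpa using h.ne, Or.inl (Or.inl ⟨a, b, rfl, rfl, h⟩)⟩

lemma cone_adj_some_none {V : Type} {G : SimpleGraph V} {Λ : Set V} {a : V}
    (h : a ∈ Λ) : (coneGraph G Λ).Adj (some a) none := by
  rw [coneGraph, fromRel_adj]
  exact ⟨by simp, Or.inr (Or.inr ⟨rfl, a, h, rfl⟩)⟩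

/-- A common-neighbors configuration yields a `K23` subgraph. -/
lemma K23_of_config {V : Type} {G : SimpleGraph V} {u v p q r : V}
    (huv : u ≠ v) (hpq : p ≠ q) (hpu : p ≠ u) (hpv : p ≠ v)
    (hqu : q ≠ u) (hqv : q ≠ v) (hru : r ≠ u) (hrv : r ≠ v) (hrp : r ≠ p) (hrq : r ≠ q)
    (a1 : G.Adj u p) (a2 : G.Adj v p) (a3 : G.Adj u q) (a4 : G.Adj v q)
    (a5 : G.Adj u r) (a6 : G.Adj v r) :
    ∃ f : Fin 5 → V, Function.Injective f ∧ ∀ a b, K23.Adj a b → G.Adj (f a) (f b) := by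
  refine ⟨![u, v, p, q, r], ?_, ?_⟩
  · intro a b hab
    fin_cases a <;> fin_cases b <;>
      simp_all [Matrix.cons_val_zero, Matrix.cons_val_one]
  · intro a b hab
    rw [K23_adj_iff] at hab
    obtain ⟨hne, h | h⟩ := hab <;>
    · fin_cases a <;> fin_cases b <;> simp_all <;>
        first
          | exact a1 | exact a2 | exact a3 | exact a4 | exact a5 | exact a6
          | exact a1.symm | exact a2.symm | exact a3.symm | exact a4.symm
          | exact a5.symm | exact a6.symm

lemma thick_aux : ∀ {V : Type} (G : SimpleGraph V), Thick G →
    Nonempty (G ≃g K22) ∨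
      ∃ f : Fin 5 → V, Function.Injective f ∧ ∀ a b, K23.Adj a b → G.Adj (f a) (f b) := by
  intro V G h
  induction h with
  | base => exact Or.inl ⟨Iso.refl⟩
  | @cone V inst G Λ hG hΛ ih =>
    obtain ⟨u, huΛ, v, hvΛ, huv, hnadj⟩ := hΛ
    rcases ih with he | ⟨f, hf, hadj⟩
    all_goals try obtain ⟨e⟩ := he
    · -- G ≅ K22 : use the two non-adjacent vertices, their common neighbors, and the apex
      obtain ⟨p, q, hpq, hpu, hpv, hqu, hqv, a1, a2, a3, a4, -⟩ := K22_common e u v huv hnadj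
      right
      refine K23_of_config (G := coneGraph G Λ) (u := some u) (v := some v)
        (p := some p) (q := some q) (r := none)
        (by simpa using huv) (by simpa using hpq) (by simpa using hpu)
        (by simpa using hpv) (by simpa using hqu) (by simpa using hqv)
        (by simp) (by simp) (by simp) (by simp)
        (cone_adj_some_some a1) (cone_adj_some_some a2)
        (cone_adj_some_some a3) (cone_adj_some_some a4)
        (cone_adj_some_none huΛ).symm.symm ?_
      · exact (cone_adj_some_none hvΛ).symm.symm
    · right
      exact ⟨fun i => some (f i), fun a b hab => hf (Option.some.inj hab),
        fun a b hab => cone_adj_some_some (hadj a b hab)⟩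
  | @union V inst G V₁ V₂ hcover h₁ h₂ hint ih₁ ih₂ =>
    rcases ih₁ with he₁ | ⟨f, hf, hadj⟩
    all_goals try obtain ⟨e₁⟩ := he₁
    · rcases ih₂ with he₂ | ⟨f, hf, hadj⟩
      all_goals try obtain ⟨e₂⟩ := he₂
      · -- both sides are K22
        obtain ⟨u, ⟨hu₁, hu₂⟩, v, ⟨hv₁, hv₂⟩, huv, hnadj⟩ := hint
        have huv₁ : (⟨u, hu₁⟩ : V₁) ≠ ⟨v, hv₁⟩ := by simpa [Subtype.ext_iff] using huv
        have huv₂ : (⟨u, hu₂⟩ : V₂) ≠ ⟨v, hv₂⟩ := by simpa [Subtype.ext_iff] using huv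
        have hn₁ : ¬ (G.induce V₁).Adj ⟨u, hu₁⟩ ⟨v, hv₁⟩ := by
          simpa [comap_adj] using hnadj
        have hn₂ : ¬ (G.induce V₂).Adj ⟨u, hu₂⟩ ⟨v, hv₂⟩ := by
          simpa [comap_adj] using hnadj
        obtain ⟨p₁, q₁, hpq₁, hpu₁, hpv₁, hqu₁, hqv₁, b1, b2, b3, b4, hall₁⟩ :=
          K22_common e₁ _ _ huv₁ hn₁
        obtain ⟨p₂, q₂, hpq₂, hpu₂, hpv₂, hqu₂, hqv₂, c1, c2, c3, c4, hall₂⟩ :=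
          K22_common e₂ _ _ huv₂ hn₂
        -- translate to G
        have b1' : G.Adj u p₁ := b1
        have b2' : G.Adj v p₁ := b2
        have b3' : G.Adj u q₁ := b3
        have b4' : G.Adj v q₁ := b4
        have c1' : G.Adj u p₂ := c1
        have c2' : G.Adj v p₂ := c2
        by_cases hp : (p₂ : V) ≠ (p₁ : V) ∧ (p₂ : V) ≠ (q₁ : V)
        · right
          exact K23_of_config huv (Subtype.coe_injective.ne hpq₁)
            (by simpa [Subtype.ext_iff] using hpu₁) (by simpa [Subtype.ext_iff] using hpv₁)
            (by simpa [Subtype.ext_iff] using hqu₁) (by simpa [Subtype.ext_iff] using hqv₁)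
            (by simpa [Subtype.ext_iff] using hpu₂) (by simpa [Subtype.ext_iff] using hpv₂)
            hp.1 hp.2 b1' b2' b3' b4' c1' c2'
        · by_cases hq : (q₂ : V) ≠ (p₁ : V) ∧ (q₂ : V) ≠ (q₁ : V)
          · right
            exact K23_of_config huv (Subtype.coe_injective.ne hpq₁)
              (by simpa [Subtype.ext_iff] using hpu₁) (by simpa [Subtype.ext_iff] using hpv₁)
              (by simpa [Subtype.ext_iff] using hqu₁) (by simpa [Subtype.ext_iff] using hqv₁)
              (by simpa [Subtype.ext_iff] using hqu₂) (by simpa [Subtype.ext_iff] using hqv₂)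
              hq.1 hq.2 b1' b2' b3' b4' c3 c4
          · -- {p₂, q₂} ⊆ {p₁, q₁}, so V₂ ⊆ V₁ and V₁ = univ
            push_neg at hp hq
            have hsubp : (p₂ : V) ∈ V₁ := by
              rcases (Classical.em ((p₂ : V) = (p₁ : V))) with h | h
              · rw [h]; exact p₁.2
              · rw [hp h]; exact q₁.2
            have hsubq : (q₂ : V) ∈ V₁ := by
              rcases (Classical.em ((q₂ : V) = (p₁ : V))) with h | h
              · rw [h]; exact p₁.2
              · rw [hq h]; exact q₁.2
            have hV₂ : V₂ ⊆ V₁ := by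
              intro x hx
              rcases hall₂ ⟨x, hx⟩ with h | h | h | h
              · rw [show x = u from congrArg Subtype.val h]; exact hu₁
              · rw [show x = v from congrArg Subtype.val h]; exact hv₁
              · rw [show x = (p₂ : V) from congrArg Subtype.val h]; exact hsubp
              · rw [show x = (q₂ : V) from congrArg Subtype.val h]; exact hsubq
            have hV₁ : V₁ = Set.univ := by
              rw [← hcover]
              exact (Set.union_eq_self_of_subset_right hV₂).symm
            left
            rw [hV₁] at e₁
            exact ⟨(G.induceUnivIso).symm.trans e₁⟩
      · right
        exact ⟨fun i => (f i).1, fun a b hab => hf (Subtype.coe_injective hab),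
          fun a b hab => hadj a b hab⟩
    · right
      exact ⟨fun i => (f i).1, fun a b hab => hf (Subtype.coe_injective hab),
        fun a b hab => hadj a b hab⟩
  | iso e hG ih =>
    rcases ih with he' | ⟨f, hf, hadj⟩
    all_goals try obtain ⟨e'⟩ := he'
    · exact Or.inl ⟨e.symm.trans e'⟩
    · exact Or.inr ⟨fun i => e (f i), fun a b hab => hf (e.injective hab),
        fun a b hab => by rw [e.map_adj_iff]; exact hadj a b hab⟩

/-- Every graph in `𝒯` is either isomorphic to `K_{2,2}` or contains `K_{2,3}` as a
(not necessarily induced) subgraph. -/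
theorem thick_K22_or_contains_K23 {V : Type} [Fintype V] (G : SimpleGraph V)
    (h : Thick G) :
    Nonempty (G ≃g K22) ∨
      ∃ f : Fin 5 → V, Function.Injective f ∧ ∀ a b, K23.Adj a b → G.Adj (f a) (f b) := by
  exact thick_aux G h
end

section
/- Define f(n) = 2n · Σ_{i=0}^{n} C(n,i) · 2^{−n − i(i−1)/2}. Then f(n) → 0 as n → ∞, and the series Σ_{n≥0} f(n) converges. -/
open Filter

/-- The function `f(n) = 2n ∑_{i=0}^{n} C(n,i) 2^{-n - i(i-1)/2}`. -/
noncomputable def fBound (n : ℕ) : ℝ :=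
  2 * n * ∑ i ∈ Finset.range (n + 1), (n.choose i : ℝ) * ((2 : ℝ) ^ (n + i * (i - 1) / 2))⁻¹

lemma aux_pow (m : ℕ) : (m + 8)^2 ≤ 2^(m + 6) := by
  induction m with
  | zero => norm_num
  | succ k ih =>
    have h : (k + 1 + 8)^2 ≤ 2 * (k + 8)^2 := by zify; nlinarith [sq_nonneg (k:ℤ), Int.natCast_nonneg k]
    calc (k + 1 + 8)^2 ≤ 2 * (k + 8)^2 := h
      _ ≤ 2 * 2^(k+6) := Nat.mul_le_mul_left 2 ih
      _ = 2^(k+1+6) := by ring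

lemma subC (n i : ℕ) (hn : 1 ≤ n) (h : i * (i - 1) ≤ n) :
    (Nat.log 2 n + 1)^2 + i ≤ n + 49 := by
  have hi : i ≤ 1 ∨ i ≤ i * (i - 1) := by
    rcases Nat.lt_or_ge i 2 with h2 | h2
    · left; omega
    · right; nlinarith [Nat.le_sub_one_of_lt h2]
  have hin : i ≤ n := by omega
  rcases Nat.lt_or_ge n 128 with hs | hl
  · have hL : Nat.log 2 n < 7 := by
      exact Nat.log_lt_of_lt_pow (by omega) (by omega)
    nlinarith
  · have hL : 7 ≤ Nat.log 2 n := by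
      rw [Nat.le_log_iff_pow_le (by norm_num) (by omega)]; omega
    obtain ⟨m, hm⟩ : ∃ m, Nat.log 2 n = m + 7 := ⟨Nat.log 2 n - 7, by omega⟩
    have h1 : (Nat.log 2 n + 1)^2 ≤ 2^(m + 6) := by
      rw [hm]; have := aux_pow m; nlinarith
    have h2 : 2^(m+6) * 2 ≤ n := by
      have h3 := Nat.pow_log_le_self 2 (show n ≠ 0 by omega)
      rw [hm] at h3
      calc 2^(m+6)*2 = 2^(m+7) := by ring
        _ ≤ n := h3
    have h3 : i ≤ 2 ∨ 2 * i ≤ n := by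
      rcases Nat.lt_or_ge i 3 with h2' | h2'
      · left; omega
      · right; nlinarith [Nat.le_sub_one_of_lt h2']
    omega

lemma mul_self_eq (i : ℕ) : i * i = i * (i - 1) + i := by
  cases i with
  | zero => simp
  | succ k => simp [Nat.succ_sub_one]; ring

lemma choose_sq_le (n i : ℕ) : (n.choose i)^2 ≤ 2^49 * 2^(n + i * (i-1)) := by
  have hc2 : n.choose i ≤ 2^n := by
    calc n.choose i ≤ ∑ m ∈ Finset.range (n+1), n.choose m := by
          rcases Nat.lt_or_ge n i with h | h
          · simp [Nat.choose_eq_zero_of_lt h]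
          · exact Finset.single_le_sum (fun _ _ => Nat.zero_le _)
              (Finset.mem_range.mpr (by omega))
      _ = 2^n := Nat.sum_range_choose n
  rcases le_or_gt n (i * (i-1)) with h | h
  · calc (n.choose i)^2 ≤ (2^n)^2 := Nat.pow_le_pow_left hc2 2
      _ = 2^(n+n) := by rw [← pow_mul]; ring_nf
      _ ≤ 2^(n + i*(i-1)) := Nat.pow_le_pow_right (by norm_num) (by omega)
      _ ≤ 2^49 * 2^(n + i*(i-1)) := Nat.le_mul_of_pos_left _ (by norm_num)
  · have hn : 1 ≤ n := by omega
    have hC := subC n i hn (le_of_lt h)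
    set L := Nat.log 2 n with hLdef
    have hnp : n ≤ 2^(L+1) := le_of_lt (Nat.lt_pow_succ_log_self (by norm_num) n)
    calc (n.choose i)^2 ≤ (n^i)^2 := Nat.pow_le_pow_left (Nat.choose_le_pow n i) 2
      _ ≤ ((2^(L+1))^i)^2 := Nat.pow_le_pow_left (Nat.pow_le_pow_left hnp i) 2
      _ = 2^((L+1) * i * 2) := by rw [← pow_mul, ← pow_mul]; ring_nf
      _ ≤ 2^(i*i + (L+1)^2) := Nat.pow_le_pow_right (by norm_num) (by zify; nlinarith [sq_nonneg ((i:ℤ) - (L+1))])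
      _ ≤ 2^(49 + (n + i * (i-1))) := by
          apply Nat.pow_le_pow_right (by norm_num)
          have hii := mul_self_eq i
          omega
      _ = 2^49 * 2^(n + i*(i-1)) := pow_add 2 49 _

lemma term_le (n i : ℕ) :
    (n.choose i : ℝ) * ((2 : ℝ) ^ (n + i * (i - 1) / 2))⁻¹
      ≤ 2^25 * ((Real.sqrt 2)⁻¹)^n := by
  set r : ℝ := (Real.sqrt 2)⁻¹ with hr
  have hs2 : (0:ℝ) < Real.sqrt 2 := Real.sqrt_pos.mpr (by norm_num)
  have hrpos : 0 < r := inv_pos.mpr hs2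
  set t : ℝ := (n.choose i : ℝ) * ((2 : ℝ) ^ (n + i * (i - 1) / 2))⁻¹ with ht
  have htnn : 0 ≤ t := by positivity
  have hBnn : (0:ℝ) ≤ 2^25 * r^n := by positivity
  have heven : Even (i * (i-1)) := by
    rcases Nat.eq_zero_or_pos i with h0 | h0
    · simp [h0]
    · have he := Nat.even_mul_succ_self (i-1)
      have h1 : i - 1 + 1 = i := by omega
      rw [h1, Nat.mul_comm] at he
      exact he
  obtain ⟨k, hk⟩ := heven
  have hexp : (n + i * (i - 1) / 2) * 2 = (n + i*(i-1)) + n := by omega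
  have ht2 : t^2 ≤ 2^49 * ((2:ℝ)^n)⁻¹ := by
    have hkeyR : ((n.choose i : ℝ))^2 ≤ 2^49 * 2^(n + i * (i-1)) := by
      exact_mod_cast choose_sq_le n i
    have h2a : (0:ℝ) < (2:ℝ)^(n + i*(i-1)) := by positivity
    have h2b : (0:ℝ) < (2:ℝ)^n := by positivity
    have hpp : ((2:ℝ)^(n + i * (i - 1) / 2))^2 = (2:ℝ)^(n+i*(i-1)) * (2:ℝ)^n := by
      rw [← pow_mul, hexp, pow_add]
    have hsq : t^2 = ((n.choose i:ℝ))^2 * ((2:ℝ)^(n + i*(i-1)))⁻¹ * ((2:ℝ)^n)⁻¹ := by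
      rw [ht, mul_pow, inv_pow, hpp, mul_inv, ← mul_assoc]
    rw [hsq]
    apply mul_le_mul_of_nonneg_right _ (by positivity)
    rw [← div_eq_mul_inv, div_le_iff₀ h2a]
    linarith [hkeyR]
  have hr2 : r^2 = (2:ℝ)⁻¹ := by
    rw [hr, inv_pow, Real.sq_sqrt (by norm_num : (0:ℝ) ≤ 2)]
  have hrhs : (2^25 * r^n)^2 = 2^50 * ((2:ℝ)^n)⁻¹ := by
    calc (2^25 * r^n)^2 = 2^50 * (r^2)^n := by ring
      _ = 2^50 * ((2:ℝ)^n)⁻¹ := by rw [hr2, inv_pow]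
  calc t = Real.sqrt (t^2) := (Real.sqrt_sq htnn).symm
    _ ≤ Real.sqrt ((2^25 * r^n)^2) := by
        apply Real.sqrt_le_sqrt
        rw [hrhs]
        have : (2:ℝ)^49 ≤ 2^50 := by norm_num
        have hp : (0:ℝ) < ((2:ℝ)^n)⁻¹ := by positivity
        calc t^2 ≤ 2^49 * ((2:ℝ)^n)⁻¹ := ht2
          _ ≤ 2^50 * ((2:ℝ)^n)⁻¹ := by nlinarith
    _ = 2^25 * r^n := Real.sqrt_sq hBnn

lemma fBound_le (n : ℕ) :
    fBound n ≤ 2^27 * ((n:ℝ)^2 * ((Real.sqrt 2)⁻¹)^n) := by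
  set r : ℝ := (Real.sqrt 2)⁻¹ with hr
  have hs2 : (0:ℝ) < Real.sqrt 2 := Real.sqrt_pos.mpr (by norm_num)
  have hrpos : 0 < r := inv_pos.mpr hs2
  have hsum : ∑ i ∈ Finset.range (n + 1), (n.choose i : ℝ) * ((2 : ℝ) ^ (n + i * (i - 1) / 2))⁻¹
      ≤ (n+1) * (2^25 * r^n) := by
    calc _ ≤ ∑ _i ∈ Finset.range (n + 1), (2^25 * r^n : ℝ) :=
          Finset.sum_le_sum (fun i _ => term_le n i)
      _ = (n+1) * (2^25 * r^n) := by
          rw [Finset.sum_const, Finset.card_range]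
          ring
  rcases Nat.eq_zero_or_pos n with h0 | h0
  · simp [fBound, h0]
  · have hn1 : ((n:ℝ)+1) ≤ 2*n := by
      have : (1:ℝ) ≤ n := by exact_mod_cast h0
      linarith
    have hnn : (0:ℝ) ≤ 2 * n := by positivity
    calc fBound n ≤ 2 * n * ((n+1) * (2^25 * r^n)) := by
          apply mul_le_mul_of_nonneg_left hsum hnn
      _ ≤ 2 * n * (2*n * (2^25 * r^n)) := by
          apply mul_le_mul_of_nonneg_left _ hnn
          apply mul_le_mul_of_nonneg_right hn1 (by positivity)
      _ = 2^27 * ((n:ℝ)^2 * r^n) := by ring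

/-- `f(n) → 0` as `n → ∞`, and moreover `∑_{n ≥ 0} f(n) < ∞`. -/
theorem fBound_tendsto_zero_and_summable :
    Tendsto fBound atTop (nhds 0) ∧ Summable fBound := by
  have hs2 : (1:ℝ) < Real.sqrt 2 := by
    rw [show (1:ℝ) = Real.sqrt 1 by simp]
    exact Real.sqrt_lt_sqrt (by norm_num) (by norm_num)
  have hr : ‖(Real.sqrt 2)⁻¹‖ < 1 := by
    rw [Real.norm_eq_abs, abs_of_pos (inv_pos.mpr (by linarith))]
    rw [inv_lt_one_iff₀]
    right; exact hs2
  have hg : Summable (fun n : ℕ => 2^27 * ((n:ℝ)^2 * ((Real.sqrt 2)⁻¹)^n)) := by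
    apply Summable.mul_left
    exact_mod_cast summable_pow_mul_geometric_of_norm_lt_one 2 hr
  have hnn : ∀ n, 0 ≤ fBound n := by
    intro n
    apply mul_nonneg (by positivity)
    apply Finset.sum_nonneg
    intro i _
    positivity
  have hsum : Summable fBound := Summable.of_nonneg_of_le hnn fBound_le hg
  exact ⟨hsum.tendsto_atTop_zero, hsum⟩
end

section
/- Let (π_n) be a sequence in [0,1], f : ℕ → [0,∞) with f(n) → 0, and suppose π_{2n} ≤ π_n² + f(n) for all n. Fix k ≥ 1 and suppose the subsequence (π_{k·2^m})_{m∈ℕ} does not have 0 as an accumulation point. Then π_{k·2^m} → 1 as m → ∞. -/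
open Filter

/-- If `(π_n) ⊆ [0,1]` satisfies `π_{2n} ≤ π_n² + f(n)` with `f ≥ 0`, `f → 0`, and for
some `k ≥ 1` the subsequence `(π_{k·2^m})_m` has no subsequence converging to `0`, then
`π_{k·2^m} → 1`. -/
theorem tendsto_one_of_no_accumulation_zero (π : ℕ → ℝ) (hπ : ∀ n, π n ∈ Set.Icc (0:ℝ) 1)
    (f : ℕ → ℝ) (hf0 : ∀ n, 0 ≤ f n) (hf : Tendsto f atTop (nhds 0))
    (hrec : ∀ n, π (2 * n) ≤ (π n) ^ 2 + f n)
    (k : ℕ) (hk : 1 ≤ k)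
    (hacc : ¬ ∃ φ : ℕ → ℕ, StrictMono φ ∧
      Tendsto (fun m => π (k * 2 ^ φ m)) atTop (nhds 0)) :
    Tendsto (fun m => π (k * 2 ^ m)) atTop (nhds 1) := by
  set a : ℕ → ℝ := fun m => π (k * 2 ^ m) with ha_def
  have ha0 : ∀ m, 0 ≤ a m := fun m => (hπ _).1
  have ha1 : ∀ m, a m ≤ 1 := fun m => (hπ _).2
  have hbdd_le : IsBoundedUnder (· ≤ ·) atTop a := isBoundedUnder_of ⟨1, fun m => ha1 m⟩
  have hbdd_ge : IsBoundedUnder (· ≥ ·) atTop a := isBoundedUnder_of ⟨0, fun m => ha0 m⟩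
  -- Step 1: 0 is not an accumulation value, so a is eventually bounded away from 0
  have hsep : ∃ ε : ℝ, 0 < ε ∧ ∀ᶠ m in atTop, ε ≤ a m := by
    by_contra h
    push_neg at h
    have hfreq : ∀ n : ℕ, ∃ᶠ m in atTop, a m < 1 / (n + 1) := by
      intro n
      have h1 : (0:ℝ) < 1 / (n + 1) := by positivity
      have := h _ h1
      exact this
    obtain ⟨φ, hφ, hφ2⟩ := extraction_forall_of_frequently hfreq
    refine hacc ⟨φ, hφ, ?_⟩
    refine squeeze_zero (fun n => ha0 (φ n)) (fun n => (hφ2 n).le) ?_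
    exact tendsto_one_div_add_atTop_nhds_zero_nat
  obtain ⟨ε, hε, hev⟩ := hsep
  set L : ℝ := liminf a atTop with hL_def
  have hLε : ε ≤ L := le_liminf_of_le hbdd_le.isCoboundedUnder_ge hev
  have hL1 : L ≤ 1 :=
    liminf_le_of_frequently_le ((Eventually.of_forall ha1).frequently) hbdd_ge
  have hLpos : 0 < L := lt_of_lt_of_le hε hLε
  -- f along the subsequence tends to 0
  have hpow : Tendsto (fun m : ℕ => k * 2 ^ m) atTop atTop := by
    apply tendsto_atTop_mono (fun m => Nat.le_mul_of_pos_left _ hk)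
    exact tendsto_pow_atTop_atTop_of_one_lt one_lt_two
  have hfk : Tendsto (fun m => f (k * 2 ^ m)) atTop (nhds 0) := hf.comp hpow
  -- recursion along the subsequence
  have hrec' : ∀ m, a (m + 1) ≤ (a m) ^ 2 + f (k * 2 ^ m) := by
    intro m
    have h2 : k * 2 ^ (m + 1) = 2 * (k * 2 ^ m) := by ring
    simpa [ha_def, h2] using hrec (k * 2 ^ m)
  -- key inequality: L ≤ (L+η)^2 + η for all η > 0
  have hkey : ∀ η : ℝ, 0 < η → L ≤ (L + η) ^ 2 + η := by
    intro η hη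
    have hfreqa : ∃ᶠ m in atTop, a m < L + η :=
      frequently_lt_of_liminf_lt hbdd_le.isCoboundedUnder_ge (by linarith)
    have hevf : ∀ᶠ m in atTop, f (k * 2 ^ m) < η := by
      have := hfk (Iio_mem_nhds hη : Set.Iio η ∈ nhds (0:ℝ))
      exact this
    have hfreq : ∃ᶠ m in atTop, a (m + 1) ≤ (L + η) ^ 2 + η := by
      refine (hfreqa.and_eventually hevf).mono ?_
      rintro m ⟨h1, h2⟩
      have : a m ^ 2 ≤ (L + η) ^ 2 := by nlinarith [ha0 m]
      calc a (m + 1) ≤ a m ^ 2 + f (k * 2 ^ m) := hrec' m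
        _ ≤ (L + η) ^ 2 + η := by linarith
    have hshift : liminf (fun m => a (m + 1)) atTop = L := liminf_nat_add a 1
    have hb : IsBoundedUnder (· ≥ ·) atTop (fun m => a (m + 1)) :=
      isBoundedUnder_of ⟨0, fun m => ha0 (m + 1)⟩
    have := liminf_le_of_frequently_le hfreq hb
    rwa [hshift] at this
  -- deduce L ≤ L^2
  have hLsq : L ≤ L ^ 2 := by
    by_contra h
    push_neg at h
    set c := L - L ^ 2 with hc
    have hcpos : 0 < c := by linarith
    have hη : (0:ℝ) < min 1 (c / 5) := by positivity
    have := hkey _ hη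
    have h1 : min 1 (c / 5) ≤ 1 := min_le_left _ _
    have h2 : min 1 (c / 5) ≤ c / 5 := min_le_right _ _
    nlinarith [hη, hL1, hLpos]
  -- hence L = 1
  have hLone : L = 1 := by nlinarith
  -- conclude convergence
  have hsup : limsup a atTop = 1 := by
    have h1 : limsup a atTop ≤ 1 :=
      limsup_le_of_le hbdd_ge.isCoboundedUnder_le (Eventually.of_forall ha1)
    have h2 : L ≤ limsup a atTop := liminf_le_limsup hbdd_le hbdd_ge
    linarith [hLone ▸ h2]
  exact tendsto_of_liminf_eq_limsup hLone hsup hbdd_le hbdd_ge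
end

section
/- Let (W, S) be a Coxeter system, let s ∈ S, and set K = S ∖ {s}. Then the subgroup of W generated by W_K ∪ s·W_K·s has index at most 2 in W. -/
/-- Let `(W,S)` be a Coxeter system, `s ∈ S`, and `K = S ∖ {s}`. Then the subgroup of `W`
generated by `W_K ∪ s W_K s` has index at most `2` in `W`. -/
theorem index_le_two_of_parabolic_and_conjugate {B : Type*} {W : Type*} [Group W]
    {M : CoxeterMatrix B} (cs : CoxeterSystem M W) (s : B) :
    letI K : Set B := {t : B | t ≠ s}
    letI WK : Subgroup W := Subgroup.closure (cs.simple '' K)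
    letI H : Subgroup W := Subgroup.closure
      ((WK : Set W) ∪ (fun w => cs.simple s * w * cs.simple s) '' (WK : Set W))
    H.index = 1 ∨ H.index = 2 := by
  set K : Set B := {t : B | t ≠ s} with hK
  set WK : Subgroup W := Subgroup.closure (cs.simple '' K) with hWK
  set H : Subgroup W := Subgroup.closure
      ((WK : Set W) ∪ (fun w => cs.simple s * w * cs.simple s) '' (WK : Set W)) with hH
  set σ := cs.simple s with hσ
  have hss : σ * σ = 1 := cs.simple_mul_simple_self s
  -- simple reflections other than s are in H
  have hsimple : ∀ t : B, t ≠ s → cs.simple t ∈ H := fun t ht =>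
    Subgroup.subset_closure (Or.inl (Subgroup.subset_closure ⟨t, ht, rfl⟩))
  -- conjugates σ * h * σ for h ∈ WK are in H
  have hconj : ∀ t : B, t ≠ s → σ * cs.simple t * σ ∈ H := fun t ht =>
    Subgroup.subset_closure (Or.inr ⟨cs.simple t, Subgroup.subset_closure ⟨t, ht, rfl⟩, rfl⟩)
  -- every element is in H or σH
  have key : ∀ w : W, w ∈ H ∨ σ * w ∈ H := by
    intro w
    induction w using cs.simple_induction_left with
    | one => exact Or.inl H.one_mem
    | mul_simple_left w t ih =>
      rcases ih with h | h
      · by_cases ht : t = s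
        · subst ht
          right
          rwa [← mul_assoc, hss, one_mul]
        · exact Or.inl (H.mul_mem (hsimple t ht) h)
      · by_cases ht : t = s
        · subst ht
          exact Or.inl h
        · right
          have : σ * (cs.simple t * w) = (σ * cs.simple t * σ) * (σ * w) := by
            rw [mul_assoc (σ * cs.simple t) σ, ← mul_assoc σ σ w, hss, one_mul,
              mul_assoc]
          rw [this]
          exact H.mul_mem (hconj t ht) h
  -- Surjection Bool → W ⧸ H, so index ≤ 2
  have hsurj : Function.Surjective (fun b : Bool => if b then ((1 : W) : W ⧸ H) else (σ : W ⧸ H)) := by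
    rintro ⟨w⟩
    rcases key w with h | h
    · exact ⟨true, by
        simp only [if_true]
        exact (QuotientGroup.eq).mpr (by simpa using h)⟩
    · exact ⟨false, by
        simp only [if_neg Bool.false_ne_true]
        refine (QuotientGroup.eq).mpr ?_
        have : σ⁻¹ = σ := by
          exact (eq_inv_of_mul_eq_one_right hss).symm
        rw [this]
        exact h⟩
  have hfin : Finite (W ⧸ H) := Finite.of_surjective _ hsurj
  have hle : H.index ≤ 2 := by
    have := Nat.card_le_card_of_surjective _ hsurj
    simpa [Subgroup.index, Nat.card_eq_fintype_card] using this
  have hpos : 0 < H.index := Nat.pos_of_ne_zero (Subgroup.index_ne_zero_of_finite)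
  interval_cases h : H.index
  · exact Or.inl rfl
  · exact Or.inr rfl
end
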